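/- Let c_1, c_2 > 0 with c_1 ≤ 2 and c_2 ≤ 2, and suppose (1 + e^{−c_1})(1 + e^{−c_2}) > 2. Then the value at z̄ = (c_1, c_2) of the sensitivity function g_0^T(z̄) g_0(z̄) = e^{−(c_1+c_2)}(1 + e^{c_1} + e^{c_2}) equals (1+e^{−c_1})(1+e^{−c_2}) − 1 and is strictly greater than 1; consequently the three-point design with support (0,0), (c_1,0), (0,c_2) and uniform weights is not D-optimal for the model f_0(z) = e^{−(z_1+z_2)/2}(1, z_1, z_2)^T on [0,c_1]×[0,c_2]. -/

import Mathlib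

open Matrix Real Finset

/-- The regression vector `f₀(z) = e^(−(z₁+z₂)/2) (1, z₁, z₂)ᵀ`. -/
noncomputable def f0 (z : ℝ × ℝ) : Fin 3 → ℝ :=
  fun i => Real.exp (-(z.1 + z.2) / 2) * ![1, z.1, z.2] i

/-- Information matrix of a finitely supported design. -/
noncomputable def infoM (s : Finset (ℝ × ℝ)) (w : ℝ × ℝ → ℝ) : Matrix (Fin 3) (Fin 3) ℝ :=
  ∑ z ∈ s, w z • Matrix.vecMulVec (f0 z) (f0 z)

/-- Arithmetic core: if `S > 1` then some `α ∈ (0,1)` strictly improves the determinant factor. -/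
lemma stmt16_aux (S : ℝ) (hS : 1 < S) : ∃ α : ℝ, 0 < α ∧ α < 1 ∧
    (1:ℝ)/27 < ((1-α)/3)^3 + ((1-α)/3)^2 * α * S := by
  have hnum : (0:ℝ) < 3*S-3 := by linarith
  have hden : (0:ℝ) < 6*S-2 := by linarith
  refine ⟨(3*S-3)/(6*S-2), div_pos hnum hden, ?_, ?_⟩
  · rw [div_lt_one hden]; linarith
  · set α := (3*S-3)/(6*S-2) with hα
    have hαpos : 0 < α := div_pos hnum hden
    have key : ((1-α)/3)^3 + ((1-α)/3)^2 * α * S - 1/27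
        = (α^2*(1+(3*S-1)*α))/27 := by
      have hαd : α * (6*S-2) = 3*S-3 := by rw [hα]; exact div_mul_cancel₀ _ hden.ne'
      field_simp [hα]; linear_combination (-27*α) * hαd
    nlinarith [mul_pos (mul_pos hαpos hαpos) (by nlinarith : (0:ℝ) < 1+(3*S-1)*α)]

/-- Determinant of the uniformly-weighted three-point design. -/
lemma det_three (c₁ c₂ : ℝ) (hc₁ : 0 < c₁) (hc₂ : 0 < c₂) :
    (infoM {((0 : ℝ), (0 : ℝ)), (c₁, 0), (0, c₂)} (fun _ => (1 : ℝ) / 3)).det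
      = (1/27) * (Real.exp (-c₁/2) * Real.exp (-c₂/2) * c₁ * c₂)^2 := by
  have h00 : ((0:ℝ),(0:ℝ)) ∉ ({(c₁,0), (0,c₂)} : Finset (ℝ×ℝ)) := by
    simp [Prod.ext_iff, hc₁.ne, hc₂.ne]
  have h10 : ((c₁:ℝ),(0:ℝ)) ∉ ({(0,c₂)} : Finset (ℝ×ℝ)) := by
    simp [Prod.ext_iff, hc₁.ne']
  rw [infoM, Finset.sum_insert h00, Finset.sum_insert h10, Finset.sum_singleton]
  have h1 : Real.exp (-((0:ℝ)+0)/2) = 1 := by norm_num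
  have h2 : Real.exp (-(c₁+0)/2) = Real.exp (-c₁/2) := by norm_num
  have h3 : Real.exp (-((0:ℝ)+c₂)/2) = Real.exp (-c₂/2) := by norm_num
  simp only [Matrix.det_fin_three, Matrix.add_apply, Matrix.smul_apply, Matrix.vecMulVec_apply,
    f0, h1, h2, h3, Matrix.cons_val_zero, Matrix.cons_val_one, Matrix.head_cons,
    Matrix.cons_val_two, Matrix.tail_cons, smul_eq_mul]
  ring

/-- Determinant of the four-point design adding mass `α` at `(c₁,c₂)`. -/
lemma det_four (c₁ c₂ α : ℝ) (hc₁ : 0 < c₁) (hc₂ : 0 < c₂) :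
    (infoM {((0 : ℝ), (0 : ℝ)), (c₁, 0), (0, c₂), (c₁, c₂)}
        (fun z => if z = (c₁, c₂) then α else (1 - α) / 3)).det
      = (Real.exp (-c₁/2) * Real.exp (-c₂/2) * c₁ * c₂)^2 *
        (((1-α)/3)^3 + ((1-α)/3)^2 * α *
          (Real.exp (-c₁/2)^2 + Real.exp (-c₂/2)^2
            + Real.exp (-c₁/2)^2 * Real.exp (-c₂/2)^2)) := by
  have h00 : ((0:ℝ),(0:ℝ)) ∉ ({(c₁,0), (0,c₂), (c₁,c₂)} : Finset (ℝ×ℝ)) := by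
    simp [Prod.ext_iff, hc₁.ne, hc₂.ne]
  have h10 : ((c₁:ℝ),(0:ℝ)) ∉ ({(0,c₂), (c₁,c₂)} : Finset (ℝ×ℝ)) := by
    simp [Prod.ext_iff, hc₁.ne', hc₂.ne]
  have h01 : ((0:ℝ),(c₂:ℝ)) ∉ ({(c₁,c₂)} : Finset (ℝ×ℝ)) := by
    simp [Prod.ext_iff, hc₁.ne]
  rw [infoM, Finset.sum_insert h00, Finset.sum_insert h10, Finset.sum_insert h01,
    Finset.sum_singleton]
  have w00 : (((0:ℝ),(0:ℝ)) = ((c₁,c₂) : ℝ×ℝ)) = False := by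
    simp [Prod.ext_iff, hc₁.ne, hc₂.ne]
  have w10 : (((c₁:ℝ),(0:ℝ)) = ((c₁,c₂) : ℝ×ℝ)) = False := by
    simp [Prod.ext_iff, hc₂.ne]
  have w01 : (((0:ℝ),(c₂:ℝ)) = ((c₁,c₂) : ℝ×ℝ)) = False := by
    simp [Prod.ext_iff, hc₁.ne]
  have h1 : Real.exp (-((0:ℝ)+0)/2) = 1 := by norm_num
  have h2 : Real.exp (-(c₁+0)/2) = Real.exp (-c₁/2) := by norm_num
  have h3 : Real.exp (-((0:ℝ)+c₂)/2) = Real.exp (-c₂/2) := by norm_num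
  have h4 : Real.exp (-(c₁+c₂)/2) = Real.exp (-c₁/2) * Real.exp (-c₂/2) := by
    rw [← Real.exp_add]; ring_nf
  simp only [Matrix.det_fin_three, Matrix.add_apply, Matrix.smul_apply, Matrix.vecMulVec_apply,
    f0, w00, w10, w01, if_false, if_true, ite_true, if_pos, h1, h2, h3, h4,
    Matrix.cons_val_zero, Matrix.cons_val_one, Matrix.head_cons,
    Matrix.cons_val_two, Matrix.tail_cons, smul_eq_mul]
  ring

/-- If `c₁, c₂ ∈ (0,2]` and `(1+e^(−c₁))(1+e^(−c₂)) > 2`, then the value of the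
sensitivity function at `(c₁,c₂)`, namely `e^(−(c₁+c₂))(1+e^(c₁)+e^(c₂))`, equals
`(1+e^(−c₁))(1+e^(−c₂)) − 1 > 1`; consequently the uniformly weighted three-point design on
`(0,0), (c₁,0), (0,c₂)` is not D-optimal for `f₀` on `[0,c₁]×[0,c₂]`: some design on the
rectangle has strictly larger determinant of its information matrix. -/
theorem stmt16 (c₁ c₂ : ℝ) (hc₁ : 0 < c₁) (hc₂ : 0 < c₂) (hc₁2 : c₁ ≤ 2) (hc₂2 : c₂ ≤ 2)
    (hKW : 2 < (1 + Real.exp (-c₁)) * (1 + Real.exp (-c₂))) :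
    (Real.exp (-(c₁ + c₂)) * (1 + Real.exp c₁ + Real.exp c₂)
        = (1 + Real.exp (-c₁)) * (1 + Real.exp (-c₂)) - 1)
    ∧ 1 < Real.exp (-(c₁ + c₂)) * (1 + Real.exp c₁ + Real.exp c₂)
    ∧ ∃ (s : Finset (ℝ × ℝ)) (w : ℝ × ℝ → ℝ),
        (↑s ⊆ Set.Icc 0 c₁ ×ˢ Set.Icc 0 c₂) ∧ (∀ z ∈ s, 0 < w z) ∧ (∑ z ∈ s, w z = 1) ∧
        (infoM {((0 : ℝ), (0 : ℝ)), (c₁, 0), (0, c₂)} (fun _ => (1 : ℝ) / 3)).det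
          < (infoM s w).det := by
  have hE : Real.exp (-(c₁ + c₂)) = Real.exp (-c₁) * Real.exp (-c₂) := by
    rw [← Real.exp_add]; ring_nf
  have hsens : Real.exp (-(c₁ + c₂)) * (1 + Real.exp c₁ + Real.exp c₂)
      = (1 + Real.exp (-c₁)) * (1 + Real.exp (-c₂)) - 1 := by
    rw [hE, Real.exp_neg, Real.exp_neg]
    field_simp
    ring
  refine ⟨hsens, by rw [hsens]; linarith, ?_⟩
  -- abbreviations
  set u := Real.exp (-c₁/2) with hu
  set v := Real.exp (-c₂/2) with hv
  have hu2 : Real.exp (-c₁) = u^2 := by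
    rw [hu, sq, ← Real.exp_add]; ring_nf
  have hv2 : Real.exp (-c₂) = v^2 := by
    rw [hv, sq, ← Real.exp_add]; ring_nf
  set S : ℝ := u^2 + v^2 + u^2 * v^2 with hS
  have hS1 : 1 < S := by
    have : 2 < (1 + u^2) * (1 + v^2) := by rw [← hu2, ← hv2]; exact hKW
    nlinarith
  obtain ⟨α, hα0, hα1, hgain⟩ := stmt16_aux S hS1
  refine ⟨{((0 : ℝ), (0 : ℝ)), (c₁, 0), (0, c₂), (c₁, c₂)},
    (fun z => if z = (c₁, c₂) then α else (1 - α) / 3), ?_, ?_, ?_, ?_⟩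
  · intro z hz
    simp only [Finset.coe_insert, Finset.coe_singleton, Set.mem_insert_iff,
      Set.mem_singleton_iff] at hz
    rcases hz with h | h | h | h <;> subst h <;>
      simp [Set.mem_prod, Set.mem_Icc, Prod.le_def, hc₁.le, hc₂.le]
  · intro z _
    by_cases h : z = (c₁, c₂) <;> simp [h] <;> linarith
  · have h00 : ((0:ℝ),(0:ℝ)) ∉ ({(c₁,0), (0,c₂), (c₁,c₂)} : Finset (ℝ×ℝ)) := by
      simp [Prod.ext_iff, hc₁.ne, hc₂.ne]
    have h10 : ((c₁:ℝ),(0:ℝ)) ∉ ({(0,c₂), (c₁,c₂)} : Finset (ℝ×ℝ)) := by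
      simp [Prod.ext_iff, hc₁.ne', hc₂.ne]
    have h01 : ((0:ℝ),(c₂:ℝ)) ∉ ({(c₁,c₂)} : Finset (ℝ×ℝ)) := by
      simp [Prod.ext_iff, hc₁.ne]
    rw [Finset.sum_insert h00, Finset.sum_insert h10, Finset.sum_insert h01,
      Finset.sum_singleton]
    have w00 : (((0:ℝ),(0:ℝ)) = ((c₁,c₂) : ℝ×ℝ)) = False := by
      simp [Prod.ext_iff, hc₁.ne, hc₂.ne]
    have w10 : (((c₁:ℝ),(0:ℝ)) = ((c₁,c₂) : ℝ×ℝ)) = False := by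
      simp [Prod.ext_iff, hc₂.ne]
    have w01 : (((0:ℝ),(c₂:ℝ)) = ((c₁,c₂) : ℝ×ℝ)) = False := by
      simp [Prod.ext_iff, hc₁.ne]
    simp only [w00, w10, w01, if_false, if_true, ite_true]
    ring
  · rw [det_three c₁ c₂ hc₁ hc₂, det_four c₁ c₂ α hc₁ hc₂]
    rw [← hu, ← hv]
    have hK : 0 < (u * v * c₁ * c₂)^2 := by
      have : u * v * c₁ * c₂ ≠ 0 := by positivity
      positivity
    calc (1/27) * (u * v * c₁ * c₂)^2
        < (((1-α)/3)^3 + ((1-α)/3)^2 * α * S) * (u * v * c₁ * c₂)^2 := by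
          exact mul_lt_mul_of_pos_right (by linarith [hgain]) hK
      _ = (u * v * c₁ * c₂)^2 * (((1-α)/3)^3 + ((1-α)/3)^2 * α * (u^2 + v^2 + u^2*v^2)) := by
          rw [hS]; ring
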